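/- Let g, h : Σ* → Δ* be monoid morphisms, # ∉ Δ, and L = { # g(v) # # reverse(h(v)) # : v ∈ Σ+ }. Then L contains a palindrome if and only if there exists a nonempty v ∈ Σ+ with g(v) = h(v). -/

import Mathlib

/-- If `a ++ x :: t1 = c ++ x :: t2` and `x` occurs in neither `a` nor `c`,
then `a = c`. -/
lemma split_eq_aux {α : Type*} : ∀ (a c t1 t2 : List α) (x : α), x ∉ a → x ∉ c →
    a ++ x :: t1 = c ++ x :: t2 → a = c := by
  intro a
  induction a with
  | nil =>
    intro c t1 t2 x _ hc he
    cases c with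
    | nil => rfl
    | cons w c' =>
      simp only [List.nil_append, List.cons_append, List.cons.injEq] at he
      exact absurd (he.1 ▸ List.mem_cons_self (a := w) (l := c')) hc
  | cons u a' ih =>
    intro c t1 t2 x ha hc he
    cases c with
    | nil =>
      simp only [List.nil_append, List.cons_append, List.cons.injEq] at he
      exact absurd (he.1 ▸ List.mem_cons_self (a := u) (l := a')) (he.1 ▸ ha)
    | cons w c' =>
      simp only [List.cons_append, List.cons.injEq] at he
      have := ih c' t1 t2 x (fun hx => ha (List.mem_cons_of_mem _ hx))
        (fun hx => hc (List.mem_cons_of_mem _ hx)) he.2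
      rw [he.1, this]

/-- For morphisms `g h : Σ* → Δ*` and a marker `#` (modelled as `none` in `Option Δ`),
the language `L = {#g(v)##(h(v))ʳ# : v ∈ Σ⁺}` contains a palindrome iff there is a
nonempty `v` with `g v = h v`. -/
theorem stmt_11 {σ Δ : Type*} (g h : List σ → List Δ)
    (hg : ∀ x y, g (x ++ y) = g x ++ g y) (hh : ∀ x y, h (x ++ y) = h x ++ h y) :
    (∃ z : List (Option Δ),
      z ∈ {s | ∃ v : List σ, v ≠ [] ∧
        s = none :: (g v).map some ++ [none, none] ++ ((h v).reverse.map some) ++ [none]} ∧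
      z.reverse = z) ↔
    ∃ v : List σ, v ≠ [] ∧ g v = h v := by
  constructor
  · rintro ⟨z, ⟨v, hv, rfl⟩, hpal⟩
    refine ⟨v, hv, ?_⟩
    set a := (g v).map some with ha
    set b := (h v).reverse.map some with hb
    have hrev : (none :: a ++ [none, none] ++ b ++ [none]).reverse
        = none :: b.reverse ++ [none, none] ++ a.reverse ++ [none] := by
      simp
    rw [hrev] at hpal
    have heq : a ++ none :: (none :: (b ++ [none]))
        = b.reverse ++ none :: (none :: (a.reverse ++ [none])) := by
      simpa using hpal.symm
    have hna : (none : Option Δ) ∉ a := by simp [ha]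
    have hnb : (none : Option Δ) ∉ b.reverse := by simp [hb]
    have hab : a = b.reverse := split_eq_aux a b.reverse _ _ none hna hnb heq
    have : (g v).map some = (h v).map some := by
      rw [ha] at hab
      rw [hab, hb, List.map_reverse, List.reverse_reverse]
    exact List.map_injective_iff.mpr (Option.some_injective _) this
  · rintro ⟨v, hv, hgh⟩
    refine ⟨_, ⟨v, hv, rfl⟩, ?_⟩
    simp only [hgh, List.reverse_cons, List.reverse_append, List.map_reverse,
      List.reverse_reverse]
    simp
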